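/- arXiv:1711.04721 — 2 statements merged into one kernel-verified Lean document; each statement's English description precedes it below -/
import Mathlib

section
/- Let K be a compact convex subset of a locally convex Hausdorff real topological vector space, and let f, g be lower semicontinuous affine functions K → (-∞, ∞]. Then f is way-below g in the dcpo LAff(K) (ordered pointwise) if and only if there exist a continuous affine function h : K → ℝ and ε > 0 such that f + ε ≤ h ≤ g pointwise. -/
/-- Membership in `LAff(K)`: lower semicontinuous affine functions
`K → (-∞, ∞]`, modeled inside `EReal`. -/
def IsLAffOn {E : Type*} [AddCommGroup E] [Module ℝ E] [TopologicalSpace E]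
    (K : Set E) (f : E → EReal) : Prop :=
  LowerSemicontinuousOn f K ∧ (∀ x ∈ K, f x ≠ ⊥) ∧
    ∀ x ∈ K, ∀ y ∈ K, ∀ t : ℝ, 0 ≤ t → t ≤ 1 →
      f (t • x + (1 - t) • y) = (t : EReal) * f x + ((1 - t : ℝ) : EReal) * f y

open Set
set_option linter.unusedSectionVars false
set_option maxHeartbeats 1000000

section helpers


-- helper: an EReal which is > ⊥ and ≤ a real coe is a real coe
lemma ereal_exists_real {u : EReal} (hb : u ≠ ⊥) {a : ℝ} (ha : u ≤ (a : EReal)) :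
    ∃ r : ℝ, u = (r : EReal) ∧ r ≤ a := by
  induction u with
  | bot => exact absurd rfl hb
  | coe r => exact ⟨r, rfl, EReal.coe_le_coe_iff.1 ha⟩
  | top => exact absurd ha (by simp)

lemma combo_le {t a b : ℝ} (ht0 : 0 ≤ t) (ht1 : t ≤ 1) {u v : EReal}
    (hub : u ≠ ⊥) (hvb : v ≠ ⊥) (hu : u ≤ (a : EReal)) (hv : v ≤ (b : EReal)) :
    (t : EReal) * u + ((1 - t : ℝ) : EReal) * v ≤ ((t * a + (1 - t) * b : ℝ) : EReal) := by
  obtain ⟨r, rfl, hra⟩ := ereal_exists_real hub hu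
  obtain ⟨s, rfl, hsb⟩ := ereal_exists_real hvb hv
  rw [← EReal.coe_mul, ← EReal.coe_mul, ← EReal.coe_add, EReal.coe_le_coe_iff]
  nlinarith

lemma combo_lt {t a b : ℝ} (ht0 : 0 ≤ t) (ht1 : t ≤ 1) {u v : EReal}
    (hu : (a : EReal) < u) (hv : (b : EReal) < v) :
    ((t * a + (1 - t) * b : ℝ) : EReal) < (t : EReal) * u + ((1 - t : ℝ) : EReal) * v := by
  induction u with
  | bot => exact absurd hu (by simp)
  | coe r =>
    induction v with
    | bot => exact absurd hv (by simp)
    | coe s =>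
      rw [← EReal.coe_mul, ← EReal.coe_mul, ← EReal.coe_add, EReal.coe_lt_coe_iff] at *
      rcases eq_or_lt_of_le ht0 with rfl | ht0'
      · simpa using hv
      · nlinarith
    | top =>
      rcases eq_or_lt_of_le ht1 with rfl | ht1'
      · simp only [sub_self, EReal.coe_zero, zero_mul, add_zero, one_mul, EReal.coe_one]
        simpa using hu
      · have h1 : ((1 - t : ℝ) : EReal) * ⊤ = ⊤ :=
          EReal.mul_top_of_pos (by exact_mod_cast sub_pos.2 ht1')
        rw [h1]
        have h2 : (t : EReal) * (r : EReal) ≠ ⊥ := by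
          rw [← EReal.coe_mul]; exact EReal.coe_ne_bot _
        rw [EReal.add_top_of_ne_bot h2]
        exact EReal.coe_lt_top _
  | top =>
    rcases eq_or_lt_of_le ht0 with rfl | ht0'
    · simp only [EReal.coe_zero, zero_mul, sub_zero, EReal.coe_one, one_mul, zero_add]
      simpa using hv
    · have h1 : (t : EReal) * ⊤ = ⊤ := EReal.mul_top_of_pos (by exact_mod_cast ht0')
      rw [h1]
      have h2 : ((1 - t : ℝ) : EReal) * v ≠ ⊥ := by
        rcases eq_or_lt_of_le ht1 with rfl | ht1'
        · simp
        · induction v with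
          | bot => exact absurd hv (by simp)
          | coe s => rw [← EReal.coe_mul]; exact EReal.coe_ne_bot _
          | top =>
            rw [EReal.mul_top_of_pos (by exact_mod_cast sub_pos.2 ht1')]
            exact top_ne_bot
      rw [EReal.top_add_of_ne_bot h2]
      exact EReal.coe_lt_top _

variable {E : Type*} [AddCommGroup E] [Module ℝ E] [TopologicalSpace E]

lemma exists_lower_bound {K : Set E} (hK : IsCompact K) {g : E → EReal}
    (hg : LowerSemicontinuousOn g K) (hb : ∀ x ∈ K, g x ≠ ⊥) :
    ∃ m : ℝ, ∀ x ∈ K, (m : EReal) < g x := by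
  rcases K.eq_empty_or_nonempty with rfl | ⟨x₀, hx₀⟩
  · exact ⟨0, by simp⟩
  have key : ∀ x ∈ K, ∃ r : ℝ, ∃ V : Set E, IsOpen V ∧ x ∈ V ∧ ∀ y ∈ V, y ∈ K → (r : EReal) < g y := by
    intro x hx
    obtain ⟨c, hc1, hc2⟩ := EReal.lt_iff_exists_real_btwn.1 (bot_lt_iff_ne_bot.2 (hb x hx))
    have := hg x hx (c : EReal) hc2
    rw [eventually_nhdsWithin_iff] at this
    obtain ⟨V, hV, hVo, hVx⟩ := eventually_nhds_iff.1 this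
    exact ⟨c, V, hVo, hVx, hV⟩
  choose! r V hVo hVx hVg using key
  obtain ⟨t, htK, htc⟩ := hK.elim_nhds_subcover V (fun x hx => (hVo x hx).mem_nhds (hVx x hx))
  have htne : (t.image r).Nonempty := by
    obtain ⟨x, hx⟩ := mem_iUnion₂.1 (htc hx₀)
    exact ⟨r x, Finset.mem_image_of_mem r hx.1⟩
  refine ⟨(t.image r).min' htne - 1, fun y hy => ?_⟩
  obtain ⟨x, hx⟩ := mem_iUnion₂.1 (htc hy)
  refine lt_trans ?_ (hVg x (htK x hx.1) y hx.2 hy)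
  rw [EReal.coe_lt_coe_iff]
  have := (t.image r).min'_le (r x) (Finset.mem_image_of_mem r hx.1)
  linarith

lemma uniform_gap {K : Set E} (hK : IsCompact K) {p : E → EReal}
    (hp : LowerSemicontinuousOn p K) {q : E → ℝ} (hq : ContinuousOn q K)
    (hlt : ∀ x ∈ K, (q x : EReal) < p x) :
    ∃ δ : ℝ, 0 < δ ∧ ∀ x ∈ K, ((q x + δ : ℝ) : EReal) < p x := by
  rcases K.eq_empty_or_nonempty with rfl | ⟨x₀, hx₀⟩
  · exact ⟨1, one_pos, by simp⟩
  have key : ∀ x ∈ K, ∃ δ : ℝ, 0 < δ ∧ ∃ V : Set E, IsOpen V ∧ x ∈ V ∧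
      ∀ y ∈ V, y ∈ K → ((q y + δ : ℝ) : EReal) < p y := by
    intro x hx
    obtain ⟨c, hc1, hc2⟩ := EReal.lt_iff_exists_real_btwn.1 (hlt x hx)
    have hqc : q x < c := EReal.coe_lt_coe_iff.1 hc1
    set δ := (c - q x) / 2 with hδ
    have hδpos : 0 < δ := by rw [hδ]; linarith
    have h1 := hp x hx (c : EReal) hc2
    have h2 : ∀ᶠ y in nhdsWithin x K, q y < q x + δ :=
      (hq x hx).eventually_mem (Iio_mem_nhds (by linarith) : Iio (q x + δ) ∈ nhds (q x))
    have h3 := h1.and h2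
    rw [eventually_nhdsWithin_iff] at h3
    obtain ⟨V, hV, hVo, hVx⟩ := eventually_nhds_iff.1 h3
    refine ⟨δ, hδpos, V, hVo, hVx, fun y hy hyK => ?_⟩
    obtain ⟨hgc, hqy⟩ := hV y hy hyK
    refine lt_trans ?_ hgc
    rw [EReal.coe_lt_coe_iff]
    have : q x + 2 * δ = c := by rw [hδ]; ring
    linarith
  choose! δ hδpos V hVo hVx hVg using key
  obtain ⟨t, htK, htc⟩ := hK.elim_nhds_subcover V (fun x hx => (hVo x hx).mem_nhds (hVx x hx))
  have htne : (t.image δ).Nonempty := by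
    obtain ⟨x, hx⟩ := mem_iUnion₂.1 (htc hx₀)
    exact ⟨δ x, Finset.mem_image_of_mem δ hx.1⟩
  refine ⟨(t.image δ).min' htne, ?_, fun y hy => ?_⟩
  · obtain ⟨x, hxm⟩ := Finset.mem_image.1 ((t.image δ).min'_mem htne)
    rw [← hxm.2]
    exact hδpos x (htK x hxm.1)
  · obtain ⟨x, hx⟩ := mem_iUnion₂.1 (htc hy)
    refine lt_of_le_of_lt ?_ (hVg x (htK x hx.1) y hx.2 hy)
    rw [EReal.coe_le_coe_iff]
    have := (t.image δ).min'_le (δ x) (Finset.mem_image_of_mem δ hx.1)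
    linarith


lemma finset_upper_bound {K : Set E} {D : Set (E → EReal)} (hne : D.Nonempty)
    (hdir : ∀ d₁ ∈ D, ∀ d₂ ∈ D, ∃ d₃ ∈ D, (∀ x ∈ K, d₁ x ≤ d₃ x) ∧ ∀ x ∈ K, d₂ x ≤ d₃ x)
    {ι : Type*} [DecidableEq ι] (t : Finset ι) (F : ι → E → EReal) (hF : ∀ i ∈ t, F i ∈ D) :
    ∃ d₃ ∈ D, ∀ i ∈ t, ∀ y ∈ K, F i y ≤ d₃ y := by
  classical
  induction t using Finset.induction_on with
  | empty => obtain ⟨d, hd⟩ := hne; exact ⟨d, hd, by simp⟩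
  | @insert a s hni ih =>
    obtain ⟨d₃, hd₃D, hd₃⟩ := ih (fun i hi => hF i (Finset.mem_insert_of_mem hi))
    obtain ⟨d₄, hd₄D, h1, h2⟩ := hdir (F a) (hF a (Finset.mem_insert_self a s)) d₃ hd₃D
    refine ⟨d₄, hd₄D, fun i hi y hy => ?_⟩
    rcases Finset.mem_insert.1 hi with rfl | hi
    · exact h1 y hy
    · exact le_trans (hd₃ i hi y hy) (h2 y hy)

/-- Reverse direction core. -/
lemma reverse_core {K : Set E} (hK : IsCompact K)
    {f g : E → EReal} {h : E → ℝ} (hhc : ContinuousOn h K) {ε : ℝ} (hε : 0 < ε)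
    (hfh : ∀ x ∈ K, f x + (ε : EReal) ≤ (h x : EReal)) (hhg : ∀ x ∈ K, (h x : EReal) ≤ g x)
    (D : Set (E → EReal)) (hDne : D.Nonempty)
    (hDlsc : ∀ d ∈ D, LowerSemicontinuousOn d K)
    (hdir : ∀ d₁ ∈ D, ∀ d₂ ∈ D, ∃ d₃ ∈ D, (∀ x ∈ K, d₁ x ≤ d₃ x) ∧ ∀ x ∈ K, d₂ x ≤ d₃ x)
    (hsup : ∀ x ∈ K, g x ≤ ⨆ d ∈ D, d x) :
    ∃ d ∈ D, ∀ x ∈ K, f x ≤ d x := by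
  classical
  rcases K.eq_empty_or_nonempty with rfl | ⟨x₀, hx₀⟩
  · obtain ⟨d, hd⟩ := hDne; exact ⟨d, hd, by simp⟩
  -- for each x ∈ K find d ∈ D and a neighborhood where h y - ε < d y
  have key : ∀ x ∈ K, ∃ d : E → EReal, d ∈ D ∧ ∃ V : Set E, IsOpen V ∧ x ∈ V ∧
      ∀ y ∈ V, y ∈ K → ((h y - ε : ℝ) : EReal) < d y := by
    intro x hx
    have h1 : ((h x - ε : ℝ) : EReal) < ⨆ d ∈ D, d x := by
      refine lt_of_lt_of_le ?_ (le_trans (hhg x hx) (hsup x hx))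
      exact_mod_cast sub_lt_self (h x) hε
    have h2 : ∃ d ∈ D, ((h x - ε : ℝ) : EReal) < d x := by
      by_contra hc
      push_neg at hc
      exact absurd (iSup₂_le fun d hd => hc d hd) (not_le.2 h1)
    obtain ⟨d, hdD, hdx⟩ := h2
    obtain ⟨c, hc1, hc2⟩ := EReal.lt_iff_exists_real_btwn.1 hdx
    have hlsc := hDlsc d hdD x hx (c : EReal) hc2
    have hcont : ∀ᶠ y in nhdsWithin x K, h y - ε < c :=
      (hhc x hx).eventually_mem
        (Iio_mem_nhds (by have := EReal.coe_lt_coe_iff.1 hc1; linarith) : Iio (c + ε) ∈ nhds (h x))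
        |>.mono (fun y hy => by simpa [sub_lt_iff_lt_add] using hy)
    have h3 := hlsc.and hcont
    rw [eventually_nhdsWithin_iff] at h3
    obtain ⟨V, hV, hVo, hVx⟩ := eventually_nhds_iff.1 h3
    refine ⟨d, hdD, V, hVo, hVx, fun y hy hyK => ?_⟩
    obtain ⟨hcd, hhy⟩ := hV y hy hyK
    exact lt_trans (EReal.coe_lt_coe_iff.2 hhy) hcd
  choose! d hdD V hVo hVx hVd using key
  obtain ⟨t, htK, htc⟩ := hK.elim_nhds_subcover V (fun x hx => (hVo x hx).mem_nhds (hVx x hx))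
  obtain ⟨d₃, hd₃D, hd₃⟩ := finset_upper_bound hDne hdir t d (fun i hi => hdD i (htK i hi))
  refine ⟨d₃, hd₃D, fun y hy => ?_⟩
  obtain ⟨x, hx⟩ := mem_iUnion₂.1 (htc hy)
  have h1 : ((h y - ε : ℝ) : EReal) < d₃ y :=
    lt_of_lt_of_le (hVd x (htK x hx.1) y hx.2 hy) (hd₃ x hx.1 y hy)
  have h2 : f y ≤ ((h y - ε : ℝ) : EReal) := by
    have := hfh y hy
    rw [show ((h y - ε : ℝ) : EReal) = (h y : EReal) - (ε : EReal) by
      rw [← EReal.coe_sub]]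
    rw [EReal.le_sub_iff_add_le (Or.inl (EReal.coe_ne_bot ε)) (Or.inl (EReal.coe_ne_top ε))]
    exact this
  exact le_of_lt (lt_of_le_of_lt h2 h1)
section join
variable {F : Type*} [AddCommGroup F] [Module ℝ F] [TopologicalSpace F]
  [IsTopologicalAddGroup F] [ContinuousSMul ℝ F]

lemma convexJoin_isCompact {A B : Set F} (hA : IsCompact A) (hB : IsCompact B) :
    IsCompact (convexJoin ℝ A B) := by
  have heq : convexJoin ℝ A B =
      (fun q : ℝ × F × F => q.1 • q.2.1 + (1 - q.1) • q.2.2) '' (Icc (0:ℝ) 1 ×ˢ A ×ˢ B) := by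
    ext z
    constructor
    · rw [mem_convexJoin]
      rintro ⟨a, ha, b, hb, u, v, hu, hv, huv, rfl⟩
      refine ⟨(u, a, b), ⟨⟨hu, by linarith⟩, ha, hb⟩, ?_⟩
      simp only
      rw [show 1 - u = v by linarith]
    · rintro ⟨⟨t, a, b⟩, ⟨⟨ht0, ht1⟩, ha, hb⟩, rfl⟩
      rw [mem_convexJoin]
      exact ⟨a, ha, b, hb, t, 1 - t, ht0, by linarith, by ring, rfl⟩
  rw [heq]
  exact ((isCompact_Icc.prod (hA.prod hB)).image (by fun_prop))
end join

variable {E : Type*} [AddCommGroup E] [Module ℝ E] [TopologicalSpace E]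

lemma epi_convex {K : Set E} (hKcvx : Convex ℝ K) {g : E → EReal}
    (hgb : ∀ x ∈ K, g x ≠ ⊥)
    (hgaff : ∀ x ∈ K, ∀ y ∈ K, ∀ t : ℝ, 0 ≤ t → t ≤ 1 →
      g (t • x + (1 - t) • y) = (t : EReal) * g x + ((1 - t : ℝ) : EReal) * g y) :
    Convex ℝ {p : E × ℝ | p.1 ∈ K ∧ g p.1 ≤ (p.2 : EReal)} := by
  rintro ⟨x, s⟩ ⟨hxK, hxs⟩ ⟨y, r⟩ ⟨hyK, hyr⟩ a b ha hb hab
  have hb' : b = 1 - a := by linarith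
  subst hb'
  have ha1 : a ≤ 1 := by linarith
  constructor
  · show a • x + (1 - a) • y ∈ K
    exact hKcvx hxK hyK ha hb (by linarith)
  · show g (a • x + (1 - a) • y) ≤ ((a • s + (1 - a) • r : ℝ) : EReal)
    rw [hgaff x hxK y hyK a ha ha1]
    simpa [smul_eq_mul] using
      combo_le ha ha1 (hgb x hxK) (hgb y hyK) hxs hyr

section sep
variable [IsTopologicalAddGroup E] [ContinuousSMul ℝ E] [T2Space E] [LocallyConvexSpace ℝ E]

lemma epi_separation {K : Set E} (hK : IsCompact K) (hKcvx : Convex ℝ K) {g : E → EReal}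
    (hg : LowerSemicontinuousOn g K) (hgb : ∀ x ∈ K, g x ≠ ⊥)
    (hgaff : ∀ x ∈ K, ∀ y ∈ K, ∀ t : ℝ, 0 ≤ t → t ≤ 1 →
      g (t • x + (1 - t) • y) = (t : EReal) * g x + ((1 - t : ℝ) : EReal) * g y)
    {C : Set (E × ℝ)} (hCc : IsCompact C) (hCv : Convex ℝ C)
    (hdisj : Disjoint C {p : E × ℝ | p.1 ∈ K ∧ g p.1 ≤ (p.2 : EReal)})
    {x₁ : E} {t₁ : ℝ} (hx₁ : x₁ ∈ K) (ht₁ : g x₁ ≤ (t₁ : EReal)) :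
    ∃ (φ : E →L[ℝ] ℝ) (β u v : ℝ), 0 ≤ β ∧ u < v ∧
      (∀ p ∈ C, φ p.1 + β * p.2 < u) ∧
      ∀ x ∈ K, ∀ t : ℝ, g x ≤ (t : EReal) → v < φ x + β * t := by
  obtain ⟨ℓ, u, v, h1, huv, h2⟩ :=
    geometric_hahn_banach_compact_closed hCv hCc (epi_convex hKcvx hgb hgaff)
      (by
        -- closedness of the epigraph
        rw [← isOpen_compl_iff, isOpen_iff_mem_nhds]
        rintro ⟨x, s⟩ hp
        simp only [mem_compl_iff, mem_setOf_eq, not_and, not_le] at hp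
        by_cases hx : x ∈ K
        · obtain ⟨r, hr1, hr2⟩ := EReal.lt_iff_exists_real_btwn.1 (hp hx)
          have hev := hg x hx (r : EReal) hr2
          rw [eventually_nhdsWithin_iff] at hev
          obtain ⟨V, hV, hVo, hVx⟩ := eventually_nhds_iff.1 hev
          have : V ×ˢ Iio r ∈ nhds (x, s) :=
            prod_mem_nhds (hVo.mem_nhds hVx) (Iio_mem_nhds (EReal.coe_lt_coe_iff.1 hr1))
          filter_upwards [this]
          rintro ⟨y, w⟩ ⟨hy, hw⟩
          simp only [mem_compl_iff, mem_setOf_eq, not_and, not_le]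
          exact fun hyK => lt_trans (EReal.coe_lt_coe_iff.2 hw) (hV y hy hyK)
        · have : (Kᶜ ×ˢ (univ : Set ℝ)) ∈ nhds (x, s) :=
            prod_mem_nhds ((hK.isClosed.isOpen_compl).mem_nhds hx) Filter.univ_mem
          filter_upwards [this]
          rintro ⟨y, w⟩ ⟨hy, _⟩
          simp only [mem_compl_iff, mem_setOf_eq, not_and]
          exact fun h => absurd h hy)
      hdisj
  set φ : E →L[ℝ] ℝ := ℓ.comp (ContinuousLinearMap.inl ℝ E ℝ) with hφ
  set β : ℝ := ℓ (0, 1) with hβ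
  have hdecomp : ∀ (x : E) (t : ℝ), ℓ (x, t) = φ x + β * t := by
    intro x t
    have : (x, t) = (x, (0:ℝ)) + t • ((0:E), (1:ℝ)) := by
      simp [Prod.ext_iff]
    rw [this, map_add, map_smul, smul_eq_mul, hφ, hβ]
    simp [ContinuousLinearMap.comp_apply, mul_comm]
  have hβ0 : 0 ≤ β := by
    by_contra hneg
    push_neg at hneg
    set n : ℝ := max 0 ((φ x₁ + t₁ * β - v) / (-β) + 1) with hn
    have hn0 : 0 ≤ n := le_max_left _ _
    have hmem : ((x₁, t₁ + n) : E × ℝ) ∈ {p : E × ℝ | p.1 ∈ K ∧ g p.1 ≤ (p.2 : EReal)} := by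
      refine ⟨hx₁, le_trans ht₁ ?_⟩
      exact EReal.coe_le_coe_iff.2 (by dsimp only; linarith)
    have h3 := h2 _ hmem
    rw [hdecomp] at h3
    have h4 : (φ x₁ + t₁ * β - v) / (-β) < n :=
      lt_of_lt_of_le (lt_add_one _) (le_max_right _ _)
    have h5 : φ x₁ + t₁ * β - v < n * (-β) := (div_lt_iff₀ (by linarith)).1 h4
    nlinarith
  refine ⟨φ, β, u, v, hβ0, huv, fun p hp => by rw [← hdecomp]; exact h1 p hp,
    fun x hx t ht => by rw [← hdecomp]; exact h2 (x, t) ⟨hx, ht⟩⟩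

end sep
/-- the continuous affine strict minorants of `g` -/
def caMin (K : Set E) (g : E → EReal) : Set (E → EReal) :=
  {d | ∃ (L : E →L[ℝ] ℝ) (c : ℝ), (∀ x, d x = ((L x + c : ℝ) : EReal)) ∧ ∀ x ∈ K, d x < g x}

lemma caMin_isLAffOn {K : Set E} {g : E → EReal} {d : E → EReal} (hd : d ∈ caMin K g) :
    IsLAffOn K d := by
  obtain ⟨L, c, hform, _⟩ := hd
  have hfe : d = fun x => ((L x + c : ℝ) : EReal) := funext hform
  refine ⟨?_, ?_, ?_⟩
  · rw [hfe]
    exact ((continuous_coe_real_ereal.comp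
      (L.continuous.add continuous_const)).lowerSemicontinuous.lowerSemicontinuousOn K :
      LowerSemicontinuousOn (fun x => ((L x + c : ℝ) : EReal)) K)
  · intro x _; rw [hform x]; exact EReal.coe_ne_bot _
  · intro x _ y _ t ht0 ht1
    rw [hform, hform, hform, ← EReal.coe_mul, ← EReal.coe_mul, ← EReal.coe_add,
      EReal.coe_eq_coe_iff, map_add, map_smul, map_smul, smul_eq_mul, smul_eq_mul]
    ring

section gsec
variable {E : Type*} [AddCommGroup E] [Module ℝ E] [TopologicalSpace E]
  [IsTopologicalAddGroup E] [ContinuousSMul ℝ E] [T2Space E] [LocallyConvexSpace ℝ E]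

lemma caMin_directed {K : Set E} (hK : IsCompact K) (hKcvx : Convex ℝ K) {g : E → EReal}
    (hg : LowerSemicontinuousOn g K) (hgb : ∀ x ∈ K, g x ≠ ⊥)
    (hgaff : ∀ x ∈ K, ∀ y ∈ K, ∀ t : ℝ, 0 ≤ t → t ≤ 1 →
      g (t • x + (1 - t) • y) = (t : EReal) * g x + ((1 - t : ℝ) : EReal) * g y) :
    ∀ d₁ ∈ caMin K g, ∀ d₂ ∈ caMin K g, ∃ d₃ ∈ caMin K g,
      (∀ x ∈ K, d₁ x ≤ d₃ x) ∧ ∀ x ∈ K, d₂ x ≤ d₃ x := by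
  rintro d₁ ⟨L₁, c₁, hf₁, hlt₁⟩ d₂ ⟨L₂, c₂, hf₂, hlt₂⟩
  rcases K.eq_empty_or_nonempty with rfl | ⟨x₀, hx₀⟩
  · exact ⟨d₁, ⟨L₁, c₁, hf₁, by simp⟩, by simp, by simp⟩
  by_cases hEne : ∃ p : E × ℝ, p.1 ∈ K ∧ g p.1 ≤ (p.2 : EReal)
  case neg =>
    have htop : ∀ x ∈ K, g x = ⊤ := by
      intro x hx
      by_contra hne
      exact hEne ⟨(x, (g x).toReal), hx, (EReal.coe_toReal hne (hgb x hx)).symm.le⟩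
    obtain ⟨z₁, hz₁K, hz₁⟩ := hK.exists_isMaxOn ⟨x₀, hx₀⟩
      ((L₁.continuous.add continuous_const).continuousOn : ContinuousOn (fun x => L₁ x + c₁) K)
    obtain ⟨z₂, hz₂K, hz₂⟩ := hK.exists_isMaxOn ⟨x₀, hx₀⟩
      ((L₂.continuous.add continuous_const).continuousOn : ContinuousOn (fun x => L₂ x + c₂) K)
    set M := max (L₁ z₁ + c₁) (L₂ z₂ + c₂) with hM
    refine ⟨fun x => (((0 : E →L[ℝ] ℝ) x + M : ℝ) : EReal),
      ⟨0, M, fun x => rfl, fun x hx => by rw [htop x hx]; exact EReal.coe_lt_top _⟩, ?_, ?_⟩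
    · intro x hx
      rw [hf₁ x]
      simp only [ContinuousLinearMap.zero_apply, zero_add]
      exact EReal.coe_le_coe_iff.2 (le_trans (hz₁ hx) (le_max_left _ _))
    · intro x hx
      rw [hf₂ x]
      simp only [ContinuousLinearMap.zero_apply, zero_add]
      exact EReal.coe_le_coe_iff.2 (le_trans (hz₂ hx) (le_max_right _ _))
  case pos =>
    obtain ⟨⟨x₁, t₁⟩, hx₁, ht₁⟩ := hEne
    set A₁ : Set (E × ℝ) := (fun x => (x, L₁ x + c₁)) '' K with hA₁
    set A₂ : Set (E × ℝ) := (fun x => (x, L₂ x + c₂)) '' K with hA₂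
    have hA₁c : IsCompact A₁ := hK.image (continuous_id.prodMk (L₁.continuous.add continuous_const))
    have hA₂c : IsCompact A₂ := hK.image (continuous_id.prodMk (L₂.continuous.add continuous_const))
    have haffim : ∀ (L : E →L[ℝ] ℝ) (c : ℝ), Convex ℝ ((fun x => (x, L x + c)) '' K) := by
      intro L c
      rintro _ ⟨x, hx, rfl⟩ _ ⟨y, hy, rfl⟩ a b ha hb hab
      refine ⟨a • x + b • y, hKcvx hx hy ha hb hab, ?_⟩
      have hb' : b = 1 - a := by linarith
      subst hb'
      refine Prod.ext rfl ?_
      show L (a • x + (1 - a) • y) + c = (a • (x, L x + c) + (1 - a) • (y, L y + c)).2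
      simp only [Prod.smul_snd, Prod.snd_add, smul_eq_mul, map_add, map_smul]
      ring
    have hA₁v : Convex ℝ A₁ := haffim L₁ c₁
    have hA₂v : Convex ℝ A₂ := haffim L₂ c₂
    set C : Set (E × ℝ) := convexJoin ℝ A₁ A₂ with hC
    have hCc : IsCompact C := convexJoin_isCompact hA₁c hA₂c
    have hCv : Convex ℝ C := hA₁v.convexJoin hA₂v
    have hdisj : Disjoint C {p : E × ℝ | p.1 ∈ K ∧ g p.1 ≤ (p.2 : EReal)} := by
      rw [Set.disjoint_left]
      rintro p hpC hpE
      rw [hC, mem_convexJoin] at hpC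
      obtain ⟨_, ⟨x, hx, rfl⟩, _, ⟨y, hy, rfl⟩, a, b, ha, hb, hab, rfl⟩ := hpC
      have hb' : b = 1 - a := by linarith
      subst hb'
      have ha1 : a ≤ 1 := by linarith
      obtain ⟨hK1, hK2⟩ := hpE
      have hfst : (a • (x, L₁ x + c₁) + (1 - a) • (y, L₂ y + c₂)).1 = a • x + (1 - a) • y := rfl
      have hsnd : (a • (x, L₁ x + c₁) + (1 - a) • (y, L₂ y + c₂)).2
          = a * (L₁ x + c₁) + (1 - a) * (L₂ y + c₂) := rfl
      rw [hfst] at hK2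
      rw [hsnd] at hK2
      rw [hgaff x hx y hy a ha ha1] at hK2
      have hlt : ((a * (L₁ x + c₁) + (1 - a) * (L₂ y + c₂) : ℝ) : EReal)
          < (a : EReal) * g x + ((1 - a : ℝ) : EReal) * g y := by
        refine combo_lt ha ha1 ?_ ?_
        · rw [← hf₁ x]; exact hlt₁ x hx
        · rw [← hf₂ y]; exact hlt₂ y hy
      exact absurd hK2 (not_le.2 hlt)
    obtain ⟨φ, β, u, v, hβ0, huv, hCu, hEv⟩ :=
      epi_separation hK hKcvx hg hgb hgaff hCc hCv hdisj hx₁ ht₁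
    have hA₁C : A₁ ⊆ C := subset_convexJoin_left ⟨_, ⟨x₀, hx₀, rfl⟩⟩
    have hA₂C : A₂ ⊆ C := subset_convexJoin_right ⟨_, ⟨x₀, hx₀, rfl⟩⟩
    have hβpos : 0 < β := by
      rcases lt_or_eq_of_le hβ0 with h | h
      · exact h
      · exfalso
        have h1 := hCu (x₁, L₁ x₁ + c₁) (hA₁C ⟨x₁, hx₁, rfl⟩)
        have h2 := hEv x₁ hx₁ t₁ ht₁
        rw [← h] at h1 h2
        simp only [zero_mul, add_zero] at h1 h2
        linarith
    refine ⟨fun x => ((((-β⁻¹) • φ) x + u / β : ℝ) : EReal),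
      ⟨(-β⁻¹) • φ, u / β, fun x => rfl, ?_⟩, ?_, ?_⟩
    · intro x hx
      have hval : ((-β⁻¹) • φ) x + u / β = (u - φ x) / β := by
        simp only [ContinuousLinearMap.smul_apply, smul_eq_mul]
        field_simp
        ring
      show ((((-β⁻¹) • φ) x + u / β : ℝ) : EReal) < g x
      rw [hval]
      by_cases hxt : g x = ⊤
      · rw [hxt]; exact EReal.coe_lt_top _
      · have hw : ((g x).toReal : EReal) = g x := EReal.coe_toReal hxt (hgb x hx)
        have h2 := hEv x hx (g x).toReal hw.ge
        rw [← hw]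
        refine EReal.coe_lt_coe_iff.2 ?_
        rw [div_lt_iff₀ hβpos]
        nlinarith
    · intro x hx
      rw [hf₁ x]
      have h1 := hCu (x, L₁ x + c₁) (hA₁C ⟨x, hx, rfl⟩)
      dsimp only at h1
      refine EReal.coe_le_coe_iff.2 ?_
      have hval : ((-β⁻¹) • φ) x + u / β = (u - φ x) / β := by
        simp only [ContinuousLinearMap.smul_apply, smul_eq_mul]
        field_simp
        ring
      rw [hval, le_div_iff₀ hβpos]
      nlinarith
    · intro x hx
      rw [hf₂ x]
      have h1 := hCu (x, L₂ x + c₂) (hA₂C ⟨x, hx, rfl⟩)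
      dsimp only at h1
      refine EReal.coe_le_coe_iff.2 ?_
      have hval : ((-β⁻¹) • φ) x + u / β = (u - φ x) / β := by
        simp only [ContinuousLinearMap.smul_apply, smul_eq_mul]
        field_simp
        ring
      rw [hval, le_div_iff₀ hβpos]
      nlinarith
end gsec

section hsec
variable {E : Type*} [AddCommGroup E] [Module ℝ E] [TopologicalSpace E]
  [IsTopologicalAddGroup E] [ContinuousSMul ℝ E] [T2Space E] [LocallyConvexSpace ℝ E]

lemma caMin_sup {K : Set E} (hK : IsCompact K) (hKcvx : Convex ℝ K) {g : E → EReal}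
    (hg : LowerSemicontinuousOn g K) (hgb : ∀ x ∈ K, g x ≠ ⊥)
    (hgaff : ∀ x ∈ K, ∀ y ∈ K, ∀ t : ℝ, 0 ≤ t → t ≤ 1 →
      g (t • x + (1 - t) • y) = (t : EReal) * g x + ((1 - t : ℝ) : EReal) * g y) :
    ∀ x₀ ∈ K, g x₀ ≤ ⨆ d ∈ caMin K g, d x₀ := by
  intro x₀ hx₀
  by_contra hc
  rw [not_le] at hc
  obtain ⟨r, hr1, hr2⟩ := EReal.lt_iff_exists_real_btwn.1 hc
  suffices hsuff : ∃ d ∈ caMin K g, (r : EReal) ≤ d x₀ by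
    obtain ⟨d, hdD, hrd⟩ := hsuff
    have hle : d x₀ ≤ ⨆ d ∈ caMin K g, d x₀ :=
      le_iSup₂ (f := fun (d : E → EReal) (_ : d ∈ caMin K g) => d x₀) d hdD
    exact absurd (le_trans hrd hle) (not_le.2 hr1)
  by_cases hEne : ∃ p : E × ℝ, p.1 ∈ K ∧ g p.1 ≤ (p.2 : EReal)
  case neg =>
    have htop : ∀ x ∈ K, g x = ⊤ := by
      intro x hx
      by_contra hne
      exact hEne ⟨(x, (g x).toReal), hx, (EReal.coe_toReal hne (hgb x hx)).symm.le⟩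
    refine ⟨fun x => (((0 : E →L[ℝ] ℝ) x + r : ℝ) : EReal),
      ⟨0, r, fun x => rfl, fun x hx => by rw [htop x hx]; exact EReal.coe_lt_top _⟩, ?_⟩
    simp
  case pos =>
    obtain ⟨⟨x₁, t₁⟩, hx₁, ht₁⟩ := hEne
    have hdisj : Disjoint {((x₀ : E), r)} {p : E × ℝ | p.1 ∈ K ∧ g p.1 ≤ (p.2 : EReal)} := by
      rw [Set.disjoint_left]
      rintro p hp hpE
      rw [Set.mem_singleton_iff] at hp
      subst hp
      exact absurd hpE.2 (not_le.2 hr2)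
    obtain ⟨φ, β, u, v, hβ0, huv, hCu, hEv⟩ :=
      epi_separation hK hKcvx hg hgb hgaff isCompact_singleton (convex_singleton _) hdisj hx₁ ht₁
    have h1 := hCu (x₀, r) rfl
    dsimp only at h1
    rcases lt_or_eq_of_le hβ0 with hβpos | hβzero
    · refine ⟨fun x => ((((-β⁻¹) • φ) x + u / β : ℝ) : EReal),
        ⟨(-β⁻¹) • φ, u / β, fun x => rfl, ?_⟩, ?_⟩
      · intro x hx
        have hval : ((-β⁻¹) • φ) x + u / β = (u - φ x) / β := by
          simp only [ContinuousLinearMap.smul_apply, smul_eq_mul]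
          field_simp; ring
        show ((((-β⁻¹) • φ) x + u / β : ℝ) : EReal) < g x
        rw [hval]
        by_cases hxt : g x = ⊤
        · rw [hxt]; exact EReal.coe_lt_top _
        · have hw : ((g x).toReal : EReal) = g x := EReal.coe_toReal hxt (hgb x hx)
          have h2 := hEv x hx (g x).toReal hw.ge
          rw [← hw]
          refine EReal.coe_lt_coe_iff.2 ?_
          rw [div_lt_iff₀ hβpos]
          nlinarith
      · show (r : EReal) ≤ ((((-β⁻¹) • φ) x₀ + u / β : ℝ) : EReal)
        have hval : ((-β⁻¹) • φ) x₀ + u / β = (u - φ x₀) / β := by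
          simp only [ContinuousLinearMap.smul_apply, smul_eq_mul]
          field_simp; ring
        rw [hval]
        refine EReal.coe_le_coe_iff.2 ?_
        rw [le_div_iff₀ hβpos]
        nlinarith
    · obtain ⟨m, hm⟩ := exists_lower_bound hK hg hgb
      rw [← hβzero] at h1 hEv
      simp only [zero_mul, add_zero] at h1
      have hvφ : 0 < v - φ x₀ := by linarith
      set n : ℝ := max 0 ((r - m) / (v - φ x₀)) with hn
      have hn0 : 0 ≤ n := le_max_left _ _
      have hval : ∀ x : E, ((-n) • φ) x + (m + n * v) = m + n * (v - φ x) := by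
        intro x
        simp only [ContinuousLinearMap.smul_apply, smul_eq_mul]
        ring
      refine ⟨fun x => ((((-n) • φ) x + (m + n * v) : ℝ) : EReal),
        ⟨(-n) • φ, m + n * v, fun x => rfl, ?_⟩, ?_⟩
      · intro x hx
        show ((((-n) • φ) x + (m + n * v) : ℝ) : EReal) < g x
        rw [hval x]
        by_cases hxt : g x = ⊤
        · rw [hxt]; exact EReal.coe_lt_top _
        · have hw : ((g x).toReal : EReal) = g x := EReal.coe_toReal hxt (hgb x hx)
          have h2 := hEv x hx (g x).toReal hw.ge
          simp only [zero_mul, add_zero] at h2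
          refine lt_of_le_of_lt ?_ (hm x hx)
          refine EReal.coe_le_coe_iff.2 ?_
          nlinarith
      · show (r : EReal) ≤ ((((-n) • φ) x₀ + (m + n * v) : ℝ) : EReal)
        rw [hval x₀]
        refine EReal.coe_le_coe_iff.2 ?_
        have h3 : (r - m) / (v - φ x₀) ≤ n := le_max_right _ _
        have h4 : r - m ≤ n * (v - φ x₀) := by
          rw [← div_le_iff₀ hvφ] at *
          exact h3
        linarith
end hsec

end helpers

/-- For `f, g ∈ LAff(K)`, `f` is way-below `g` in the dcpo
`LAff(K)` (with pointwise order, directed suprema being pointwise suprema)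
if and only if there are a continuous affine `h : K → ℝ` and `ε > 0` with
`f + ε ≤ h ≤ g` pointwise on `K`. -/
theorem laff_wayBelow_iff {E : Type*} [AddCommGroup E] [Module ℝ E]
    [TopologicalSpace E] [IsTopologicalAddGroup E] [ContinuousSMul ℝ E]
    [T2Space E] [LocallyConvexSpace ℝ E]
    (K : Set E) (hKcpt : IsCompact K) (hKcvx : Convex ℝ K)
    (f g : E → EReal) (hf : IsLAffOn K f) (hg : IsLAffOn K g) :
    (∀ D : Set (E → EReal), D.Nonempty → (∀ d ∈ D, IsLAffOn K d) →
        (∀ d₁ ∈ D, ∀ d₂ ∈ D, ∃ d₃ ∈ D, (∀ x ∈ K, d₁ x ≤ d₃ x) ∧ ∀ x ∈ K, d₂ x ≤ d₃ x) →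
        (∀ x ∈ K, g x ≤ ⨆ d ∈ D, d x) →
        ∃ d ∈ D, ∀ x ∈ K, f x ≤ d x)
      ↔ ∃ h : E → ℝ, ContinuousOn h K ∧
          (∀ x ∈ K, ∀ y ∈ K, ∀ t : ℝ, 0 ≤ t → t ≤ 1 →
            h (t • x + (1 - t) • y) = t * h x + (1 - t) * h y) ∧
          ∃ ε : ℝ, 0 < ε ∧ (∀ x ∈ K, f x + (ε : EReal) ≤ (h x : EReal)) ∧
            ∀ x ∈ K, (h x : EReal) ≤ g x := by
  obtain ⟨hglsc, hgb, hgaff⟩ := hg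
  constructor
  · intro hyp
    have hDne : (caMin K g).Nonempty := by
      rcases K.eq_empty_or_nonempty with rfl | hKne
      · exact ⟨fun x => (((0 : E →L[ℝ] ℝ) x + 0 : ℝ) : EReal), 0, 0, fun x => rfl, by simp⟩
      · obtain ⟨m, hm⟩ := exists_lower_bound hKcpt hglsc hgb
        exact ⟨fun x => (((0 : E →L[ℝ] ℝ) x + m : ℝ) : EReal), 0, m, fun x => rfl,
          fun x hx => by simpa using hm x hx⟩
    obtain ⟨d, hdD, hfd⟩ := hyp (caMin K g) hDne (fun d hd => caMin_isLAffOn hd)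
      (caMin_directed hKcpt hKcvx hglsc hgb hgaff) (caMin_sup hKcpt hKcvx hglsc hgb hgaff)
    obtain ⟨L, c, hform, hlt⟩ := hdD
    have hlt' : ∀ x ∈ K, (((fun x => L x + c) x : ℝ) : EReal) < g x := by
      intro x hx
      rw [← hform x]
      exact hlt x hx
    obtain ⟨δ, hδ, hgap⟩ := uniform_gap hKcpt hglsc
      ((L.continuous.add continuous_const).continuousOn) hlt'
    refine ⟨fun x => L x + c + δ, ?_, ?_, δ, hδ, ?_, ?_⟩
    · exact ((L.continuous.add continuous_const).add continuous_const).continuousOn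
    · intro x _ y _ t ht0 ht1
      simp only [map_add, map_smul, smul_eq_mul]
      ring
    · intro x hx
      have h1 : f x ≤ ((L x + c : ℝ) : EReal) := by
        rw [← hform x]; exact hfd x hx
      calc f x + (δ : EReal) ≤ ((L x + c : ℝ) : EReal) + (δ : EReal) :=
            add_le_add_left h1 _
        _ = ((L x + c + δ : ℝ) : EReal) := by rw [← EReal.coe_add]
    · intro x hx
      exact le_of_lt (hgap x hx)
  · rintro ⟨h, hhc, _, ε, hε, hfh, hhg⟩ D hDne hDlaff hdir hsup
    exact reverse_core hKcpt hhc hε hfh hhg D hDne (fun d hd => (hDlaff d hd).1) hdir hsup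
end

section
/- Let K be a compact convex set such that LAff(K) is an inf-semilattice. Then addition distributes over infima in LAff(K): for all f, g, h ∈ LAff(K), f + (g ∧ h) = (f + g) ∧ (f + h). -/
open Set Filter Topology
open scoped Pointwise

set_option linter.unusedSectionVars false

lemma ereal_le_of_forall_real_lt {A B : EReal}
    (h : ∀ s : ℝ, (s : EReal) < A → (s : EReal) ≤ B) : A ≤ B := by
  by_contra hAB
  obtain ⟨s, hBs, hsA⟩ := EReal.exists_between_coe_real (not_le.1 hAB)
  exact absurd (h s hsA) (not_le.2 hBs)

lemma ereal_mul_add {t : ℝ} (ht : 0 ≤ t) {A B : EReal} (hA : A ≠ ⊥) (hB : B ≠ ⊥) :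
    (t : EReal) * (A + B) = (t : EReal) * A + (t : EReal) * B := by
  rcases eq_or_lt_of_le ht with ht0 | htpos
  · rw [← ht0]; simp
  · induction A with
    | bot => exact absurd rfl hA
    | coe A =>
        induction B with
        | bot => exact absurd rfl hB
        | coe B =>
            rw [← EReal.coe_add, ← EReal.coe_mul, ← EReal.coe_mul, ← EReal.coe_mul,
              ← EReal.coe_add]
            norm_cast
            ring
        | top =>
            rw [EReal.coe_add_top, EReal.coe_mul_top_of_pos htpos, ← EReal.coe_mul,
              EReal.coe_add_top]
    | top =>
        have h1 : (⊤ : EReal) + B = ⊤ := EReal.top_add_of_ne_bot hB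
        have h2 : (t : EReal) * B ≠ ⊥ := by
          induction B with
          | bot => exact absurd rfl hB
          | coe B => rw [← EReal.coe_mul]; exact EReal.coe_ne_bot _
          | top => rw [EReal.coe_mul_top_of_pos htpos]; simp
        rw [h1, EReal.coe_mul_top_of_pos htpos, EReal.top_add_of_ne_bot h2]

lemma ereal_exists_real_s8 {A : EReal} (h1 : A ≠ ⊥) (h2 : A ≠ ⊤) : ∃ r : ℝ, A = (r : EReal) := by
  induction A with
  | bot => exact absurd rfl h1
  | coe r => exact ⟨r, rfl⟩
  | top => exact absurd rfl h2

lemma ereal_ne_bot_of_le {b : ℝ} {A : EReal} (h : (b : EReal) ≤ A) : A ≠ ⊥ := by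
  intro hA
  rw [hA] at h
  simp at h

lemma ereal_mul_ne_bot_of_nonneg {t : ℝ} (ht : 0 ≤ t) {A : EReal} (hA : A ≠ ⊥) :
    (t : EReal) * A ≠ ⊥ := by
  rcases eq_or_lt_of_le ht with h0 | hpos
  · rw [← h0]; simp
  · induction A with
    | bot => exact absurd rfl hA
    | coe r => rw [← EReal.coe_mul]; exact EReal.coe_ne_bot _
    | top => rw [EReal.coe_mul_top_of_pos hpos]; simp


/-- `m` is the infimum of `f` and `g` in `LAff(K)` with the pointwise order. -/
def IsLAffInf {E : Type*} [AddCommGroup E] [Module ℝ E] [TopologicalSpace E]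
    (K : Set E) (f g m : E → EReal) : Prop :=
  IsLAffOn K m ∧ (∀ x ∈ K, m x ≤ f x) ∧ (∀ x ∈ K, m x ≤ g x) ∧
    ∀ h : E → EReal, IsLAffOn K h → (∀ x ∈ K, h x ≤ f x) →
      (∀ x ∈ K, h x ≤ g x) → ∀ x ∈ K, h x ≤ m x


section
variable {E : Type*} [AddCommGroup E] [Module ℝ E] [TopologicalSpace E]
  [IsTopologicalAddGroup E] [ContinuousSMul ℝ E] [LocallyConvexSpace ℝ E] [T2Space E]

lemma lsc_sublevel_closed {K : Set E} (hK : IsClosed K) {p : E → EReal}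
    (hp : LowerSemicontinuousOn p K) (b : EReal) :
    IsClosed {x | x ∈ K ∧ p x ≤ b} := by
  rw [← isOpen_compl_iff, isOpen_iff_mem_nhds]
  intro x hx
  by_cases hxK : x ∈ K
  · have hbx : b < p x := by
      by_contra hc
      exact hx ⟨hxK, not_lt.1 hc⟩
    have h1 := hp x hxK b hbx
    rw [eventually_nhdsWithin_iff] at h1
    exact h1.mono fun y hy hyS => absurd hyS.2 (not_le.2 (hy hyS.1))
  · exact Filter.mem_of_superset (hK.isOpen_compl.mem_nhds hxK) fun y hy hyS => hy hyS.1

lemma lsc_exists_min {K : Set E} (hK : IsCompact K) (hKcl : IsClosed K) (hne : K.Nonempty)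
    {p : E → EReal}
    (hp : LowerSemicontinuousOn p K) : ∃ x ∈ K, ∀ y ∈ K, p x ≤ p y := by
  set c := sInf (p '' K) with hc
  by_cases hctop : c = ⊤
  · obtain ⟨x, hx⟩ := hne
    refine ⟨x, hx, fun y hy => ?_⟩
    have h2 : c ≤ p y := sInf_le ⟨y, hy, rfl⟩
    rw [hctop] at h2
    exact le_trans le_top h2
  · have hι : Nonempty {b : EReal // c < b} := ⟨⟨⊤, lt_top_iff_ne_top.2 hctop⟩⟩
    set t : {b : EReal // c < b} → Set E := fun b => {x | x ∈ K ∧ p x ≤ b.1} with ht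
    have htne : ∀ b, (t b).Nonempty := by
      intro b
      obtain ⟨v, ⟨x, hxK, rfl⟩, hvb⟩ := sInf_lt_iff.1 b.2
      exact ⟨x, hxK, hvb.le⟩
    have htcl : ∀ b, IsClosed (t b) := fun b => lsc_sublevel_closed hKcl hp b.1
    have htcp : ∀ b, IsCompact (t b) := fun b => hK.of_isClosed_subset (htcl b) fun x hx => hx.1
    have htd : Directed (· ⊇ ·) t := by
      intro b₁ b₂
      exact ⟨⟨min b₁.1 b₂.1, lt_min b₁.2 b₂.2⟩,
        fun x hx => ⟨hx.1, hx.2.trans (min_le_left _ _)⟩,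
        fun x hx => ⟨hx.1, hx.2.trans (min_le_right _ _)⟩⟩
    obtain ⟨x, hx⟩ := IsCompact.nonempty_iInter_of_directed_nonempty_isCompact_isClosed
      t htd htne htcp htcl
    have hxK : x ∈ K := (mem_iInter.1 hx hι.some).1
    refine ⟨x, hxK, fun y hy => ?_⟩
    have hxc : p x ≤ c := by
      by_contra hcc
      obtain ⟨b, hcb, hbx⟩ := exists_between (not_le.1 hcc)
      exact absurd ((mem_iInter.1 hx ⟨b, hcb⟩).2) (not_le.2 hbx)
    exact hxc.trans (sInf_le ⟨y, hy, rfl⟩)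

lemma isLAffOn_coe_affine {K : Set E} {k : E → ℝ} (hk : Continuous k)
    (haff : ∀ x y : E, ∀ t : ℝ, k (t • x + (1 - t) • y) = t * k x + (1 - t) * k y) :
    IsLAffOn K fun x => (k x : EReal) := by
  refine ⟨((continuous_coe_real_ereal.comp hk).lowerSemicontinuous).lowerSemicontinuousOn _,
    fun x _ => EReal.coe_ne_bot _, fun x _ y _ t _ _ => ?_⟩
  show ((k (t • x + (1 - t) • y) : ℝ) : EReal) = _
  rw [haff x y t, EReal.coe_add, EReal.coe_mul, EReal.coe_mul]

lemma IsLAffOn.addLAff {K : Set E} {f g : E → EReal} (hf : IsLAffOn K f) (hg : IsLAffOn K g) :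
    IsLAffOn K fun x => f x + g x := by
  refine ⟨hf.1.add' hg.1 fun x hx =>
      EReal.continuousAt_add (Or.inr (hg.2.1 x hx)) (Or.inl (hf.2.1 x hx)),
    fun x hx => by simp [EReal.add_eq_bot_iff, hf.2.1 x hx, hg.2.1 x hx],
    fun x hx y hy t ht0 ht1 => ?_⟩
  show f (t • x + (1 - t) • y) + g (t • x + (1 - t) • y) = _
  rw [hf.2.2 x hx y hy t ht0 ht1, hg.2.2 x hx y hy t ht0 ht1,
    ereal_mul_add ht0 (hf.2.1 x hx) (hg.2.1 x hx),
    ereal_mul_add (by linarith) (hf.2.1 y hy) (hg.2.1 y hy)]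
  exact add_add_add_comm _ _ _ _

lemma sep_minorant {K : Set E}
    (C : Set (E × ℝ)) (hCconv : Convex ℝ C) (hCcl : IsClosed C) (hCne : C.Nonempty)
    (hup : ∀ q ∈ C, ∀ δ : ℝ, 0 ≤ δ → q + ((0 : E), δ) ∈ C)
    {p : E → EReal}
    (hdom : ∀ x ∈ K, ∀ r : ℝ, p x ≤ (r : EReal) → (x, r) ∈ C)
    (b : ℝ) (hb : ∀ x ∈ K, (b : EReal) ≤ p x)
    {x₀ : E} {s : ℝ} (hx₀ : (x₀, s) ∉ C) :
    ∃ k : E → ℝ, Continuous k ∧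
      (∀ x y : E, ∀ t : ℝ, k (t • x + (1 - t) • y) = t * k x + (1 - t) * k y) ∧
      (∀ x ∈ K, (k x : EReal) ≤ p x) ∧ s < k x₀ := by
  obtain ⟨F, u, hFs, hFC⟩ := geometric_hahn_banach_point_closed hCconv hCcl hx₀
  set β := F ((0 : E), (1 : ℝ)) with hβdef
  have hdecomp : ∀ (x : E) (t : ℝ), F (x, t) = F (x, 0) + t * β := by
    intro x t
    have h1 : ((x, t) : E × ℝ) = (x, 0) + t • ((0 : E), (1 : ℝ)) := by
      simp [Prod.ext_iff]
    rw [h1, map_add, map_smul, smul_eq_mul]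
  have hcont0 : Continuous fun x : E => F (x, 0) :=
    F.continuous.comp (continuous_id.prodMk continuous_const)
  have haff0 : ∀ (x y : E) (t : ℝ),
      F (t • x + (1 - t) • y, 0) = t * F (x, 0) + (1 - t) * F (y, 0) := by
    intro x y t
    have h1 : ((t • x + (1 - t) • y, (0 : ℝ)) : E × ℝ) = t • (x, 0) + (1 - t) • (y, 0) := by
      simp [Prod.ext_iff]
    rw [h1, map_add, map_smul, map_smul, smul_eq_mul, smul_eq_mul]
  have hβ0 : 0 ≤ β := by
    by_contra hneg
    push_neg at hneg
    obtain ⟨q, hq⟩ := hCne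
    obtain ⟨n, hn⟩ := exists_nat_gt ((F q - u) / (-β))
    have hq' := hFC _ (hup q hq n (Nat.cast_nonneg n))
    have h00 : F ((0 : E), (0 : ℝ)) = 0 := by
      rw [show ((0 : E), (0 : ℝ)) = (0 : E × ℝ) from rfl, map_zero]
    have h2 : F (q + ((0 : E), (n : ℝ))) = F q + n * β := by
      rw [map_add, hdecomp 0 n, h00]
      ring
    rw [h2] at hq'
    rw [div_lt_iff₀ (neg_pos.2 hneg)] at hn
    nlinarith
  rcases eq_or_lt_of_le hβ0 with hβeq | hβpos
  · -- β = 0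
    have hgt : ∀ x ∈ K, p x ≠ ⊤ → u < F (x, 0) := by
      intro x hxK hxt
      obtain ⟨r, hr⟩ := ereal_exists_real_s8 (ereal_ne_bot_of_le (hb x hxK)) hxt
      have h3 := hFC _ (hdom x hxK r hr.le)
      rw [hdecomp, ← hβeq] at h3
      simpa using h3
    have hlt0 : 0 < u - F (x₀, 0) := by
      have h4 := hFs
      rw [hdecomp, ← hβeq] at h4
      simp at h4
      linarith
    obtain ⟨n, hn⟩ := exists_nat_gt ((s - b) / (u - F (x₀, 0)))
    refine ⟨fun x => b + n * (u - F (x, 0)), by fun_prop, ?_, ?_, ?_⟩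
    · intro x y t
      dsimp only
      rw [haff0]
      ring
    · intro x hxK
      by_cases hxt : p x = ⊤
      · rw [hxt]; exact le_top
      · have h5 := hgt x hxK hxt
        refine le_trans ?_ (hb x hxK)
        have h6 : (b + n * (u - F (x, 0)) : ℝ) ≤ b := by nlinarith [Nat.cast_nonneg (α := ℝ) n]
        exact_mod_cast h6
    · show s < b + n * (u - F (x₀, 0))
      rw [div_lt_iff₀ hlt0] at hn
      linarith
  · -- β > 0
    refine ⟨fun x => (u - F (x, 0)) / β, by fun_prop, ?_, ?_, ?_⟩
    · intro x y t
      dsimp only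
      rw [haff0]
      field_simp
      ring
    · intro x hxK
      by_cases hxt : p x = ⊤
      · rw [hxt]; exact le_top
      · obtain ⟨r, hr⟩ := ereal_exists_real_s8 (ereal_ne_bot_of_le (hb x hxK)) hxt
        have h3 := hFC _ (hdom x hxK r hr.le)
        rw [hdecomp] at h3
        have h7 : (u - F (x, 0)) / β ≤ r := by
          rw [div_le_iff₀ hβpos]
          linarith
        rw [hr]
        exact_mod_cast h7
    · show s < (u - F (x₀, 0)) / β
      have h4 := hFs
      rw [hdecomp] at h4
      rw [lt_div_iff₀ hβpos]
      linarith

lemma epi_convex_s8 {K : Set E} (hKcvx : Convex ℝ K) {p : E → EReal} (hp : IsLAffOn K p) :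
    Convex ℝ {q : E × ℝ | q.1 ∈ K ∧ p q.1 ≤ (q.2 : EReal)} := by
  intro q hq q' hq' a b ha hb hab
  have hb' : b = 1 - a := by linarith
  subst hb'
  refine ⟨hKcvx hq.1 hq'.1 ha hb hab, ?_⟩
  have hfst : (a • q + (1 - a) • q').1 = a • q.1 + (1 - a) • q'.1 := rfl
  have hsnd : (a • q + (1 - a) • q').2 = a * q.2 + (1 - a) * q'.2 := rfl
  rw [hfst, hsnd, hp.2.2 q.1 hq.1 q'.1 hq'.1 a ha (by linarith)]
  calc (a : EReal) * p q.1 + ((1 - a : ℝ) : EReal) * p q'.1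
      ≤ (a : EReal) * (q.2 : EReal) + ((1 - a : ℝ) : EReal) * (q'.2 : EReal) :=
        add_le_add (mul_le_mul_of_nonneg_left hq.2 (by exact_mod_cast ha))
          (mul_le_mul_of_nonneg_left hq'.2 (by exact_mod_cast hb))
    _ = ((a * q.2 + (1 - a) * q'.2 : ℝ) : EReal) := by
        rw [← EReal.coe_mul, ← EReal.coe_mul, ← EReal.coe_add]

lemma epi_closed {K : Set E} (hKcl : IsClosed K) {p : E → EReal}
    (hp : LowerSemicontinuousOn p K) :
    IsClosed {q : E × ℝ | q.1 ∈ K ∧ p q.1 ≤ (q.2 : EReal)} := by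
  rw [← isOpen_compl_iff, isOpen_iff_mem_nhds]
  rintro ⟨x, v⟩ hq
  by_cases hxK : x ∈ K
  · have hlt : (v : EReal) < p x := by
      by_contra hc
      exact hq ⟨hxK, not_lt.1 hc⟩
    obtain ⟨r, hvr, hrp⟩ := EReal.exists_between_coe_real hlt
    have hA : {y | y ∈ K → (r : EReal) < p y} ∈ 𝓝 x := by
      have h1 := hp x hxK r hrp
      rwa [eventually_nhdsWithin_iff] at h1
    have hB : Iio r ∈ 𝓝 v := Iio_mem_nhds (by exact_mod_cast hvr)
    refine Filter.mem_of_superset (prod_mem_nhds hA hB) ?_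
    rintro ⟨y, w⟩ ⟨hy, hw⟩ hmem
    have h1 : (r : EReal) < p y := hy hmem.1
    have h2 : (w : EReal) < (r : EReal) := by exact_mod_cast hw
    exact absurd hmem.2 (not_le.2 (h2.trans h1))
  · refine Filter.mem_of_superset (prod_mem_nhds (hKcl.isOpen_compl.mem_nhds hxK)
      Filter.univ_mem) ?_
    rintro ⟨y, w⟩ ⟨hy, -⟩ hmem
    exact hy hmem.1

lemma epi_upward {K : Set E} {p : E → EReal} :
    ∀ q ∈ {q : E × ℝ | q.1 ∈ K ∧ p q.1 ≤ (q.2 : EReal)}, ∀ δ : ℝ, 0 ≤ δ →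
      q + ((0 : E), δ) ∈ {q : E × ℝ | q.1 ∈ K ∧ p q.1 ≤ (q.2 : EReal)} := by
  rintro ⟨y, w⟩ ⟨hy, hw⟩ δ hδ
  have h1 : ((y, w) + ((0 : E), δ)) = (y, w + δ) := by
    simp [Prod.ext_iff]
  rw [h1]
  exact ⟨hy, hw.trans (by exact_mod_cast le_add_of_nonneg_right hδ)⟩

lemma exists_affine_minorant {E : Type*} [AddCommGroup E] [Module ℝ E] [TopologicalSpace E]
    [IsTopologicalAddGroup E] [ContinuousSMul ℝ E] [LocallyConvexSpace ℝ E] [T2Space E]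
    {K : Set E} (hKcpt : IsCompact K) (hKcvx : Convex ℝ K)
    {p : E → EReal} (hp : IsLAffOn K p) {x₀ : E} (hx₀K : x₀ ∈ K) {s : ℝ}
    (hs : (s : EReal) < p x₀) :
    ∃ k : E → ℝ, Continuous k ∧
      (∀ x y : E, ∀ t : ℝ, k (t • x + (1 - t) • y) = t * k x + (1 - t) * k y) ∧
      (∀ x ∈ K, (k x : EReal) ≤ p x) ∧ s < k x₀ := by
  obtain ⟨xm, hxmK, hxm⟩ := lsc_exists_min hKcpt hKcpt.isClosed ⟨x₀, hx₀K⟩ hp.1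
  by_cases htop : p xm = ⊤
  · refine ⟨fun _ => s + 1, continuous_const, fun x y t => by ring, fun x hxK => ?_, by norm_num⟩
    have h1 : p x = ⊤ := top_le_iff.1 (htop ▸ hxm x hxK)
    rw [h1]
    exact le_top
  · obtain ⟨b, hbeq⟩ := ereal_exists_real_s8 (hp.2.1 xm hxmK) htop
    have hb : ∀ x ∈ K, (b : EReal) ≤ p x := fun x hxK => hbeq ▸ hxm x hxK
    exact sep_minorant _ (epi_convex_s8 hKcvx hp) (epi_closed hKcpt.isClosed hp.1)
      ⟨(xm, b), hxmK, hbeq.le⟩ epi_upward (fun x hxK r hr => ⟨hxK, hr⟩) b hb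
      (fun hc => absurd hc.2 (not_le.2 hs))

lemma bauer_minimum {E : Type*} [AddCommGroup E] [Module ℝ E] [TopologicalSpace E]
    [IsTopologicalAddGroup E] [ContinuousSMul ℝ E] [LocallyConvexSpace ℝ E] [T2Space E]
    {K : Set E} (hKcpt : IsCompact K) (hne : K.Nonempty)
    {r : E → EReal} (hr : IsLAffOn K r) :
    ∃ z ∈ K.extremePoints ℝ, ∀ y ∈ K, r z ≤ r y := by
  obtain ⟨xm, hxmK, hxm⟩ := lsc_exists_min hKcpt hKcpt.isClosed hne hr.1
  set c := r xm with hc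
  set M := {x | x ∈ K ∧ r x ≤ c} with hM
  have hMsub : M ⊆ K := fun x hx => hx.1
  have hMcl : IsClosed M := lsc_sublevel_closed hKcpt.isClosed hr.1 c
  have hMcp : IsCompact M := hKcpt.of_isClosed_subset hMcl hMsub
  have hMne : M.Nonempty := ⟨xm, hxmK, le_rfl⟩
  have key : ∀ u v z : E, u ∈ K → v ∈ K → z ∈ M → ∀ a : ℝ, 0 < a → a < 1 →
      a • u + (1 - a) • v = z → r u ≤ c := by
    intro u v z huK hvK hzM a ha0 ha1 hz
    by_cases hctop : c = ⊤
    · rw [hctop]; exact le_top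
    · have hcbot : c ≠ ⊥ := by rw [hc]; exact hr.2.1 xm hxmK
      obtain ⟨cr, hcr⟩ := ereal_exists_real_s8 hcbot hctop
      have hrz : r z = c := le_antisymm hzM.2 (hxm z hzM.1)
      have haff := hr.2.2 u huK v hvK a ha0.le ha1.le
      rw [hz, hrz] at haff
      -- haff : c = a * r u + (1-a) * r v
      by_contra hgt
      have hgt' : c < r u := not_le.1 hgt
      have hvb : r v ≠ ⊥ := hr.2.1 v hvK
      have hvc : c ≤ r v := hxm v hvK
      by_cases hut : r u = ⊤
      · rw [hut, EReal.coe_mul_top_of_pos ha0] at haff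
        have h2 : ((1 - a : ℝ) : EReal) * r v ≠ ⊥ :=
          ereal_mul_ne_bot_of_nonneg (by linarith) hvb
        rw [EReal.top_add_of_ne_bot h2, hcr] at haff
        exact absurd haff (EReal.coe_ne_top cr)
      · obtain ⟨ru, hru⟩ := ereal_exists_real_s8 (hr.2.1 u huK) hut
        by_cases hvt : r v = ⊤
        · rw [hru, hvt, EReal.coe_mul_top_of_pos (by linarith : (0:ℝ) < 1 - a),
            ← EReal.coe_mul, EReal.coe_add_top, hcr] at haff
          exact absurd haff (EReal.coe_ne_top cr)
        · obtain ⟨rv, hrv⟩ := ereal_exists_real_s8 hvb hvt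
          rw [hru, hrv, hcr, ← EReal.coe_mul, ← EReal.coe_mul, ← EReal.coe_add] at haff
          have e1 : cr = a * ru + (1 - a) * rv := by exact_mod_cast haff
          have e2 : cr < ru := by
            rw [hcr, hru] at hgt'
            exact_mod_cast hgt'
          have e3 : cr ≤ rv := by
            rw [hcr, hrv] at hvc
            exact_mod_cast hvc
          nlinarith
  have hext : IsExtreme ℝ K M := by
    refine ⟨hMsub, fun x hxK y hyK z hzM hzseg => ?_⟩
    obtain ⟨a, b, ha, hb, hab, hz⟩ := hzseg
    have hb' : b = 1 - a := by linarith
    rw [hb'] at hz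
    exact ⟨hxK, key x y z hxK hyK hzM a ha (by linarith) hz⟩
  obtain ⟨z, hz⟩ := hMcp.extremePoints_nonempty hMne
  have hzM : z ∈ M := hz.1
  exact ⟨z, hext.extremePoints_subset_extremePoints hz,
    fun y hy => hzM.2.trans (hxm y hy)⟩


end

lemma inf_min_at_extreme {E : Type*} [AddCommGroup E] [Module ℝ E] [TopologicalSpace E]
    [IsTopologicalAddGroup E] [ContinuousSMul ℝ E] [LocallyConvexSpace ℝ E] [T2Space E]
    {K : Set E} (hKcpt : IsCompact K) (hKcvx : Convex ℝ K)
    {g h m : E → EReal} (hg : IsLAffOn K g) (hh : IsLAffOn K h)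
    (hm : IsLAffInf K g h m) {x₀ : E} (hx₀ : x₀ ∈ K.extremePoints ℝ) :
    min (g x₀) (h x₀) ≤ m x₀ := by
  obtain ⟨hx₀K, hx₀ext⟩ := mem_extremePoints.1 hx₀
  refine ereal_le_of_forall_real_lt fun s hsmin => ?_
  obtain ⟨hsg, hsh⟩ := lt_min_iff.1 hsmin
  -- produce a continuous affine k ≤ g, k ≤ h on K with s < k x₀
  suffices hex : ∃ k : E → ℝ, Continuous k ∧
      (∀ x y : E, ∀ t : ℝ, k (t • x + (1 - t) • y) = t * k x + (1 - t) * k y) ∧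
      (∀ x ∈ K, (k x : EReal) ≤ g x) ∧ (∀ x ∈ K, (k x : EReal) ≤ h x) ∧ s < k x₀ by
    obtain ⟨k, hkc, hka, hkg, hkh, hkx⟩ := hex
    have hkL : IsLAffOn K fun x => (k x : EReal) := isLAffOn_coe_affine hkc hka
    have hle := hm.2.2.2 _ hkL hkg hkh x₀ hx₀K
    exact le_trans (by exact_mod_cast hkx.le) hle
  by_cases hgtop : ∀ x ∈ K, g x = ⊤
  · obtain ⟨k, hkc, hka, hkh, hkx⟩ := exists_affine_minorant hKcpt hKcvx hh hx₀K hsh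
    exact ⟨k, hkc, hka, fun x hxK => (hgtop x hxK) ▸ le_top, hkh, hkx⟩
  by_cases hhtop : ∀ x ∈ K, h x = ⊤
  · obtain ⟨k, hkc, hka, hkg, hkx⟩ := exists_affine_minorant hKcpt hKcvx hg hx₀K hsg
    exact ⟨k, hkc, hka, hkg, fun x hxK => (hhtop x hxK) ▸ le_top, hkx⟩
  push_neg at hgtop hhtop
  obtain ⟨xg, hxgK, hxgt⟩ := hgtop
  obtain ⟨xh, hxhK, hxht⟩ := hhtop
  obtain ⟨rg, hrg⟩ := ereal_exists_real_s8 (hg.2.1 xg hxgK) hxgt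
  obtain ⟨rh, hrh⟩ := ereal_exists_real_s8 (hh.2.1 xh hxhK) hxht
  -- lower bounds
  obtain ⟨xmg, hxmgK, hxmg⟩ := lsc_exists_min hKcpt hKcpt.isClosed ⟨x₀, hx₀K⟩ hg.1
  obtain ⟨xmh, hxmhK, hxmh⟩ := lsc_exists_min hKcpt hKcpt.isClosed ⟨x₀, hx₀K⟩ hh.1
  obtain ⟨bg, hbg⟩ := ereal_exists_real_s8 (hg.2.1 xmg hxmgK)
    (fun hc => absurd (top_le_iff.1 (hc ▸ hxmg xg hxgK)) hxgt)
  obtain ⟨bh, hbh⟩ := ereal_exists_real_s8 (hh.2.1 xmh hxmhK)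
    (fun hc => absurd (top_le_iff.1 (hc ▸ hxmh xh hxhK)) hxht)
  have hbgle : ∀ x ∈ K, (bg : EReal) ≤ g x := fun x hxK => hbg ▸ hxmg x hxK
  have hbhle : ∀ x ∈ K, (bh : EReal) ≤ h x := fun x hxK => hbh ▸ hxmh x hxK
  -- affine minorants through x₀
  obtain ⟨k₁, hk₁c, hk₁a, hk₁g, hk₁x⟩ := exists_affine_minorant hKcpt hKcvx hg hx₀K hsg
  obtain ⟨k₂, hk₂c, hk₂a, hk₂h, hk₂x⟩ := exists_affine_minorant hKcpt hKcvx hh hx₀K hsh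
  -- epigraphs
  set eG := {q : E × ℝ | q.1 ∈ K ∧ g q.1 ≤ (q.2 : EReal)} with heG
  set eH := {q : E × ℝ | q.1 ∈ K ∧ h q.1 ≤ (q.2 : EReal)} with heH
  have heGne : eG.Nonempty := ⟨(xg, rg), hxgK, hrg.le⟩
  have heHne : eH.Nonempty := ⟨(xh, rh), hxhK, hrh.le⟩
  set S := convexHull ℝ (eG ∪ eH) with hS
  have hSeq : S = convexJoin ℝ eG eH :=
    (epi_convex_s8 hKcvx hg).convexHull_union (epi_convex_s8 hKcvx hh) heGne heHne
  -- the closed superset Q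
  set Φ : ℝ × E × E → E × ℝ := fun q =>
    (q.1 • q.2.1 + (1 - q.1) • q.2.2, q.1 * k₁ q.2.1 + (1 - q.1) * k₂ q.2.2) with hΦ
  have hΦcont : Continuous Φ := by fun_prop
  set Q₀ := Φ '' (Icc (0:ℝ) 1 ×ˢ K ×ˢ K) with hQ₀
  have hQ₀cp : IsCompact Q₀ := ((isCompact_Icc).prod (hKcpt.prod hKcpt)).image hΦcont
  set R := (({0} : Set E) ×ˢ Ici (0:ℝ)) with hR
  have hRcl : IsClosed R := isClosed_singleton.prod isClosed_Ici
  set Q := Q₀ + R with hQ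
  have hQcl : IsClosed Q := hRcl.add_left_of_isCompact hQ₀cp
  -- S ⊆ Q
  have hSQ : S ⊆ Q := by
    rw [hSeq]
    rintro z hz
    rw [mem_convexJoin] at hz
    obtain ⟨p, hp, q, hq, a, b, ha, hb, hab, hz⟩ := hz
    have hb' : b = 1 - a := by linarith
    subst hb'
    have hk₁p : k₁ p.1 ≤ p.2 := by
      have h1 : (k₁ p.1 : EReal) ≤ (p.2 : EReal) := (hk₁g p.1 hp.1).trans hp.2
      exact_mod_cast h1
    have hk₂q : k₂ q.1 ≤ q.2 := by
      have h1 : (k₂ q.1 : EReal) ≤ (q.2 : EReal) := (hk₂h q.1 hq.1).trans hq.2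
      exact_mod_cast h1
    have hzQ₀ : Φ (a, p.1, q.1) ∈ Q₀ :=
      ⟨(a, p.1, q.1), ⟨⟨ha, by linarith⟩, hp.1, hq.1⟩, rfl⟩
    have hδ : ((0:E), a * (p.2 - k₁ p.1) + (1 - a) * (q.2 - k₂ q.1)) ∈ R :=
      ⟨rfl, by
        show (0:ℝ) ≤ a * (p.2 - k₁ p.1) + (1 - a) * (q.2 - k₂ q.1)
        nlinarith [mul_nonneg ha (sub_nonneg.2 hk₁p), mul_nonneg hb (sub_nonneg.2 hk₂q)]⟩
    have hΦval : Φ (a, p.1, q.1)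
        = (a • p.1 + (1 - a) • q.1, a * k₁ p.1 + (1 - a) * k₂ q.1) := rfl
    have hsum : Φ (a, p.1, q.1) + ((0:E), a * (p.2 - k₁ p.1) + (1 - a) * (q.2 - k₂ q.1)) = z := by
      rw [← hz, hΦval]
      have hz1 : (a • p + (1 - a) • q).1 = a • p.1 + (1 - a) • q.1 := rfl
      have hz2 : (a • p + (1 - a) • q).2 = a * p.2 + (1 - a) * q.2 := rfl
      refine Prod.ext ?_ ?_
      · rw [Prod.fst_add, hz1]
        show a • p.1 + (1 - a) • q.1 + 0 = a • p.1 + (1 - a) • q.1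
        rw [add_zero]
      · rw [Prod.snd_add, hz2]
        show a * k₁ p.1 + (1 - a) * k₂ q.1 + (a * (p.2 - k₁ p.1) + (1 - a) * (q.2 - k₂ q.1))
          = a * p.2 + (1 - a) * q.2
        ring
    exact hsum ▸ Set.add_mem_add hzQ₀ hδ
  -- (x₀, s) ∉ Q
  have hx₀Q : ((x₀, s) : E × ℝ) ∉ Q := by
    rintro hmem
    rw [Set.mem_add] at hmem
    obtain ⟨q₀, hq₀, ρ, hρ, heq⟩ := hmem
    obtain ⟨⟨a, x, y⟩, ⟨⟨ha0, ha1⟩, hxK, hyK⟩, hq₀eq⟩ := hq₀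
    obtain ⟨hρ1, hρ2⟩ := hρ
    have hρ2' : (0:ℝ) ≤ ρ.2 := hρ2
    have hρeq : ρ = ((0 : E), ρ.2) := Prod.ext hρ1 rfl
    have hΦval : Φ (a, x, y) = (a • x + (1 - a) • y, a * k₁ x + (1 - a) * k₂ y) := rfl
    rw [← hq₀eq, hρeq, hΦval, Prod.mk_add_mk, add_zero, Prod.mk.injEq] at heq
    obtain ⟨heq1, heq2⟩ := heq
    -- heq1 : a • x + (1 - a) • y = x₀,  heq2 : a k₁ x + (1-a) k₂ y + ρ.2 = s
    rcases eq_or_lt_of_le ha0 with ha0' | ha0'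
    · have haz : a = 0 := ha0'.symm
      subst haz
      rw [zero_smul, zero_add, sub_zero, one_smul] at heq1
      rw [zero_mul, zero_add, sub_zero, one_mul, heq1] at heq2
      linarith [hk₂x]
    rcases eq_or_lt_of_le ha1 with ha1' | ha1'
    · subst ha1'
      rw [one_smul, sub_self, zero_smul, add_zero] at heq1
      rw [one_mul, sub_self, zero_mul, heq1] at heq2
      linarith [hk₁x]
    · obtain ⟨hxx₀, hyx₀⟩ := hx₀ext x hxK y hyK
        ⟨a, 1 - a, ha0', by linarith, by ring, heq1⟩
      rw [hxx₀, hyx₀] at heq2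
      nlinarith [hk₁x, hk₂x]
  -- the closed convex set C
  set C := closure S with hC
  have hCcl : IsClosed C := isClosed_closure
  have hCconv : Convex ℝ C := (convex_convexHull ℝ _).closure
  have hCne : C.Nonempty :=
    ⟨(xg, rg), subset_closure (subset_convexHull ℝ _ (Set.mem_union_left _ ⟨hxgK, hrg.le⟩))⟩
  have hSsubC : S ⊆ C := subset_closure
  have hCsubQ : C ⊆ Q := closure_minimal hSQ hQcl
  have hx₀C : ((x₀, s) : E × ℝ) ∉ C := fun hc => hx₀Q (hCsubQ hc)
  -- upward closedness of C
  have hupS : ∀ δ : ℝ, 0 ≤ δ → ∀ q ∈ S, q + ((0:E), δ) ∈ S := by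
    intro δ hδ z hz
    rw [hSeq] at hz ⊢
    rw [mem_convexJoin] at hz ⊢
    obtain ⟨p, hp, q, hq, a, b, ha, hb, hab, hz⟩ := hz
    refine ⟨p + ((0:E), δ), epi_upward p hp δ hδ, q + ((0:E), δ),
      epi_upward q hq δ hδ, a, b, ha, hb, hab, ?_⟩
    rw [← hz]
    have h2 : a • ((0:E), δ) + b • ((0:E), δ) = ((0:E), δ) := by
      rw [Prod.smul_mk, Prod.smul_mk, Prod.mk_add_mk, smul_zero, smul_zero, add_zero,
        smul_eq_mul, smul_eq_mul, ← add_mul, hab, one_mul]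
    rw [smul_add, smul_add]
    rw [show a • p + a • ((0:E), δ) + (b • q + b • ((0:E), δ))
        = a • p + b • q + (a • ((0:E), δ) + b • ((0:E), δ)) by abel, h2]
  have hupC : ∀ q ∈ C, ∀ δ : ℝ, 0 ≤ δ → q + ((0:E), δ) ∈ C := by
    intro q hq δ hδ
    have hmaps : Set.MapsTo (fun z : E × ℝ => z + ((0:E), δ)) S S := fun z hz => hupS δ hδ z hz
    exact hmaps.closure (by fun_prop) hq
  -- apply sep_minorant with p := pointwise min of g and h
  obtain ⟨k, hkc, hka, hkmin, hkx⟩ := sep_minorant (K := K) C hCconv hCcl hCne hupC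
    (p := fun x => min (g x) (h x))
    (fun x hxK r hr => by
      rcases le_total (g x) (h x) with hgh | hgh
      · exact hSsubC (subset_convexHull ℝ _
          (Set.mem_union_left _ ⟨hxK, (min_eq_left hgh ▸ hr : g x ≤ (r:EReal))⟩))
      · exact hSsubC (subset_convexHull ℝ _
          (Set.mem_union_right _ ⟨hxK, (min_eq_right hgh ▸ hr : h x ≤ (r:EReal))⟩)))
    (min bg bh)
    (fun x hxK => le_min
      ((by exact_mod_cast min_le_left bg bh : ((min bg bh : ℝ) : EReal) ≤ (bg : EReal)).trans (hbgle x hxK))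
      ((by exact_mod_cast min_le_right bg bh : ((min bg bh : ℝ) : EReal) ≤ (bh : EReal)).trans (hbhle x hxK)))
    hx₀C
  exact ⟨k, hkc, hka, fun x hxK => (hkmin x hxK).trans (min_le_left _ _),
    fun x hxK => (hkmin x hxK).trans (min_le_right _ _), hkx⟩


/-- In `LAff(K)` on a compact convex set `K` (assumed to be an
inf-semilattice, witnessed here by the two given infima), addition distributes
over infima: `f + (g ∧ h) = (f + g) ∧ (f + h)`. -/
theorem laff_add_distrib_inf {E : Type*} [AddCommGroup E] [Module ℝ E]
    [TopologicalSpace E] [IsTopologicalAddGroup E] [ContinuousSMul ℝ E]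
    [T2Space E] [LocallyConvexSpace ℝ E]
    (K : Set E) (hKcpt : IsCompact K) (hKcvx : Convex ℝ K)
    (f g h m m' : E → EReal)
    (hf : IsLAffOn K f) (hg : IsLAffOn K g) (hh : IsLAffOn K h)
    (hm : IsLAffInf K g h m)
    (hm' : IsLAffInf K (fun x => f x + g x) (fun x => f x + h x) m') :
    ∀ x ∈ K, f x + m x = m' x := by
  intro x hx
  have hfm : IsLAffOn K fun y => f y + m y := hf.addLAff hm.1
  refine le_antisymm ?_ ?_
  · exact hm'.2.2.2 _ hfm
      (fun y hy => add_le_add le_rfl (hm.2.1 y hy))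
      (fun y hy => add_le_add le_rfl (hm.2.2.1 y hy)) x hx
  · refine ereal_le_of_forall_real_lt fun s hs => ?_
    obtain ⟨k, hkc, hka, hkle, hkx⟩ := exists_affine_minorant hKcpt hKcvx hm'.1 hx hs
    have hnegk : IsLAffOn K fun y => ((-(k y) : ℝ) : EReal) :=
      isLAffOn_coe_affine hkc.neg (fun u v t => by rw [hka u v t]; ring)
    have hrL : IsLAffOn K fun y => (f y + m y) + ((-(k y) : ℝ) : EReal) := hfm.addLAff hnegk
    have hposext : ∀ z ∈ K.extremePoints ℝ,
        (0 : EReal) ≤ (f z + m z) + ((-(k z) : ℝ) : EReal) := by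
      intro z hz
      have hzK : z ∈ K := hz.1
      have hminle : min (g z) (h z) ≤ m z := inf_min_at_extreme hKcpt hKcvx hg hh hm hz
      have h1 : m' z ≤ f z + m z := by
        rcases le_total (g z) (h z) with hgh | hgh
        · have h2 : m' z ≤ f z + g z := hm'.2.1 z hzK
          have h3 : g z ≤ m z := (min_eq_left hgh) ▸ hminle
          exact h2.trans (add_le_add le_rfl h3)
        · have h2 : m' z ≤ f z + h z := hm'.2.2.1 z hzK
          have h3 : h z ≤ m z := (min_eq_right hgh) ▸ hminle
          exact h2.trans (add_le_add le_rfl h3)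
      have h4 : ((k z : ℝ) : EReal) ≤ f z + m z := (hkle z hzK).trans h1
      calc (0 : EReal) = ((k z : ℝ) : EReal) + ((-(k z) : ℝ) : EReal) := by
            rw [← EReal.coe_add]
            norm_num
        _ ≤ (f z + m z) + ((-(k z) : ℝ) : EReal) := add_le_add h4 le_rfl
    obtain ⟨z, hzext, hzmin⟩ := bauer_minimum hKcpt ⟨x, hx⟩ hrL
    have h0 : (0 : EReal) ≤ (f x + m x) + ((-(k x) : ℝ) : EReal) :=
      le_trans (hposext z hzext) (hzmin x hx)
    have h5 : ((k x : ℝ) : EReal) ≤ f x + m x := by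
      calc ((k x : ℝ) : EReal) = ((k x : ℝ) : EReal) + 0 := (add_zero _).symm
        _ ≤ ((k x : ℝ) : EReal) + ((f x + m x) + ((-(k x) : ℝ) : EReal)) :=
            add_le_add le_rfl h0
        _ = (f x + m x) + (((k x : ℝ) : EReal) + ((-(k x) : ℝ) : EReal)) := by
            rw [add_left_comm]
        _ = f x + m x := by
            rw [← EReal.coe_add]
            norm_num
    have h6 : (s : EReal) ≤ ((k x : ℝ) : EReal) := by exact_mod_cast hkx.le
    exact h6.trans h5
end
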